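/- (Osgood's lemma, positive constant case.) Suppose c > 0 and f(t) ≤ c + ∫_{t₀}^t γ(s)·g(f(s)) ds for almost every t ∈ [t₀, T]. Then for almost every t ∈ [t₀, T]: ∫_{(c, f(t)]} (1/g(r)) dr ≤ ∫_{t₀}^t γ(s) ds, where the left-hand integral is over the interval (c, f(t)] (and equals 0 when f(t) ≤ c); equivalently, −M(f(t)) + M(c) ≤ ∫_{t₀}^t γ(s) ds with M(x) = ∫_x^a dr/g(r). -/

import Mathlib

open MeasureTheory intervalIntegral

/-- Osgood's lemma, positive constant case: if `f(t) ≤ c + ∫_{t₀}^t γ(s) g(f(s)) ds`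
for a.e. `t ∈ [t₀, T]` with `c > 0`, then
`∫_{(c, f(t)]} dr / g(r) ≤ ∫_{t₀}^t γ(s) ds` for a.e. `t ∈ [t₀, T]`. -/
theorem osgood_lemma_pos
    (t₀ T a c : ℝ) (ht₀ : 0 ≤ t₀) (htT : t₀ < T) (ha : 0 < a) (hc : 0 < c)
    (f γ g : ℝ → ℝ)
    (hf_meas : Measurable f) (hf_mem : ∀ t ∈ Set.Icc t₀ T, f t ∈ Set.Icc 0 a)
    (hγ_int : IntegrableOn γ (Set.Icc t₀ T)) (hγ_nonneg : ∀ s ∈ Set.Icc t₀ T, 0 ≤ γ s)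
    (hg_cont : ContinuousOn g (Set.Icc 0 a)) (hg_mono : MonotoneOn g (Set.Icc 0 a))
    (hg_nonneg : ∀ r ∈ Set.Icc 0 a, 0 ≤ g r) (hg_pos : ∀ r ∈ Set.Ioc 0 a, 0 < g r)
    (h_ineq : ∀ᵐ t ∂(volume.restrict (Set.Icc t₀ T)),
        f t ≤ c + ∫ s in t₀..t, γ s * g (f s)) :
    ∀ᵐ t ∂(volume.restrict (Set.Icc t₀ T)),
      (∫ r in Set.Ioc c (f t), (g r)⁻¹) ≤ ∫ s in t₀..t, γ s := by
  -- the "clamped" version of g, defined on all of ℝ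
  set c' : ℝ := min c a with hc'def
  have hc'_pos : 0 < c' := lt_min hc ha
  have hc'_mem : c' ∈ Set.Icc (0:ℝ) a := ⟨hc'_pos.le, min_le_right _ _⟩
  have hgc' : 0 < g c' := hg_pos c' ⟨hc'_pos, min_le_right _ _⟩
  set g' : ℝ → ℝ := fun r => g (max 0 (min r a)) with hg'def
  have hclamp_mem : ∀ r : ℝ, max 0 (min r a) ∈ Set.Icc (0:ℝ) a := fun r =>
    ⟨le_max_left _ _, max_le ha.le (min_le_right _ _)⟩
  have hg'_cont : Continuous g' :=
    hg_cont.comp_continuous (continuous_const.max (continuous_id.min continuous_const)) hclamp_mem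
  have hg'_mono : Monotone g' := fun r r' h =>
    hg_mono (hclamp_mem r) (hclamp_mem r') (max_le_max le_rfl (min_le_min h le_rfl))
  have hg'_nonneg : ∀ r, 0 ≤ g' r := fun r => hg_nonneg _ (hclamp_mem r)
  have hg'_le : ∀ r, g' r ≤ g a := fun r =>
    hg_mono (hclamp_mem r) (Set.right_mem_Icc.2 ha.le) (hclamp_mem r).2
  have hg'_ge : ∀ r, c ≤ r → g c' ≤ g' r := by
    intro r hr
    exact hg_mono hc'_mem (hclamp_mem r) (le_max_of_le_right (min_le_min hr le_rfl))
  have hg'_eq : ∀ r ∈ Set.Icc (0:ℝ) a, g' r = g r := by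
    intro r hr
    simp only [hg'def, min_eq_left hr.2, max_eq_right hr.1]
  -- the integrand ρ and the functions F, G
  set ρ : ℝ → ℝ := fun s => γ s * g' (f s) with hρdef
  have hρ_int : IntegrableOn ρ (Set.Icc t₀ T) := by
    have h1 : IntegrableOn (fun s => g' (f s) * γ s) (Set.Icc t₀ T) := by
      refine hγ_int.bdd_mul (c := g a) ((hg'_cont.measurable.comp hf_meas).aestronglyMeasurable) (Filter.Eventually.of_forall ?_)
      intro x
      rw [Real.norm_eq_abs, abs_of_nonneg (hg'_nonneg _)]
      exact hg'_le _
    exact h1.congr_fun (fun s _ => mul_comm _ _) measurableSet_Icc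
  have hρ_ii : ∀ x y, t₀ ≤ x → x ≤ y → y ≤ T → IntervalIntegrable ρ volume x y := by
    intro x y hx hxy hy
    have := hρ_int.mono_set (Set.Icc_subset_Icc hx hy)
    rw [← Set.uIcc_of_le hxy] at this
    exact this.intervalIntegrable
  have hγ_ii : ∀ x y, t₀ ≤ x → x ≤ y → y ≤ T → IntervalIntegrable γ volume x y := by
    intro x y hx hxy hy
    have := hγ_int.mono_set (Set.Icc_subset_Icc hx hy)
    rw [← Set.uIcc_of_le hxy] at this
    exact this.intervalIntegrable
  set F : ℝ → ℝ := fun t => c + ∫ s in t₀..t, ρ s with hFdef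
  set G : ℝ → ℝ := fun t => ∫ s in t₀..t, γ s with hGdef
  have hF_diff : ∀ x y, t₀ ≤ x → x ≤ y → y ≤ T → F y - F x = ∫ s in x..y, ρ s := by
    intro x y hx hxy hy
    have h := integral_add_adjacent_intervals (hρ_ii t₀ x le_rfl hx (hxy.trans hy))
      (hρ_ii x y hx hxy hy)
    show (c + ∫ s in t₀..y, ρ s) - (c + ∫ s in t₀..x, ρ s) = _
    linarith
  have hG_diff : ∀ x y, t₀ ≤ x → x ≤ y → y ≤ T → G y - G x = ∫ s in x..y, γ s := by
    intro x y hx hxy hy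
    have h := integral_add_adjacent_intervals (hγ_ii t₀ x le_rfl hx (hxy.trans hy))
      (hγ_ii x y hx hxy hy)
    show (∫ s in t₀..y, γ s) - (∫ s in t₀..x, γ s) = _
    linarith
  have hρ_nonneg : ∀ s ∈ Set.Icc t₀ T, 0 ≤ ρ s := fun s hs =>
    mul_nonneg (hγ_nonneg s hs) (hg'_nonneg _)
  have hF_mono : ∀ x y, t₀ ≤ x → x ≤ y → y ≤ T → F x ≤ F y := by
    intro x y hx hxy hy
    have h0 : (0:ℝ) ≤ ∫ s in x..y, ρ s :=
      intervalIntegral.integral_nonneg hxy (fun u hu =>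
        hρ_nonneg u ⟨hx.trans hu.1, hu.2.trans hy⟩)
    have := hF_diff x y hx hxy hy
    linarith
  have hF_t₀ : F t₀ = c := by
    show c + ∫ s in t₀..t₀, ρ s = c
    simp
  have hF_ge : ∀ t ∈ Set.Icc t₀ T, c ≤ F t := by
    intro t ht
    have := hF_mono t₀ t le_rfl ht.1 ht.2
    rw [hF_t₀] at this
    exact this
  have hG_nonneg : ∀ t ∈ Set.Icc t₀ T, 0 ≤ G t := by
    intro t ht
    exact intervalIntegral.integral_nonneg ht.1 (fun u hu =>
      hγ_nonneg u ⟨hu.1, hu.2.trans ht.2⟩)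
  have hF_cont : ContinuousOn F (Set.Icc t₀ T) := by
    rw [← Set.uIcc_of_le htT.le]
    refine continuousOn_const.add (intervalIntegral.continuousOn_primitive_interval ?_)
    rw [Set.uIcc_of_le htT.le]
    exact hρ_int
  have hG_cont : ContinuousOn G (Set.Icc t₀ T) := by
    rw [← Set.uIcc_of_le htT.le]
    refine intervalIntegral.continuousOn_primitive_interval ?_
    rw [Set.uIcc_of_le htT.le]
    exact hγ_int
  -- the Osgood primitive Φ
  set K : ℝ := (g c')⁻¹ with hKdef
  have hK_pos : 0 < K := inv_pos.2 hgc'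
  set Φ : ℝ → ℝ := fun x => ∫ r in Set.Ioc c x, (g' r)⁻¹ with hΦdef
  have hinv_int : ∀ x y : ℝ, c ≤ x → IntegrableOn (fun r => (g' r)⁻¹) (Set.Ioc x y) := by
    intro x y hx
    refine Measure.integrableOn_of_bounded (M := K) (by simp) ?_ ?_
    · exact (hg'_cont.measurable.inv).aestronglyMeasurable
    · refine (ae_restrict_iff' measurableSet_Ioc).2 (Filter.Eventually.of_forall ?_)
      intro r hr
      rw [Real.norm_eq_abs, abs_of_nonneg (inv_nonneg.2 (hg'_nonneg _))]
      exact inv_anti₀ hgc' (hg'_ge r (hx.trans hr.1.le))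
  have hΦ_split : ∀ x y, c ≤ x → x ≤ y →
      Φ y = Φ x + ∫ r in Set.Ioc x y, (g' r)⁻¹ := by
    intro x y hx hxy
    show (∫ r in Set.Ioc c y, (g' r)⁻¹) = _
    rw [← Set.Ioc_union_Ioc_eq_Ioc hx hxy,
      setIntegral_union (Set.Ioc_disjoint_Ioc_of_le le_rfl) measurableSet_Ioc
        (hinv_int c x le_rfl) (hinv_int x y hx)]
  have hΦ_nonneg : ∀ x, 0 ≤ Φ x := fun x =>
    setIntegral_nonneg measurableSet_Ioc (fun r _ => inv_nonneg.2 (hg'_nonneg _))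
  have hΦ_mono : Monotone Φ := by
    intro x y hxy
    exact setIntegral_mono_set (hinv_int c y le_rfl)
      (Filter.Eventually.of_forall (fun r => inv_nonneg.2 (hg'_nonneg _)))
      ((Set.Ioc_subset_Ioc_right hxy).eventuallyLE)
  have hΦ_piece : ∀ x y, c ≤ x → x ≤ y →
      (∫ r in Set.Ioc x y, (g' r)⁻¹) ≤ K * (y - x) := by
    intro x y hx hxy
    calc (∫ r in Set.Ioc x y, (g' r)⁻¹) ≤ ∫ _ in Set.Ioc x y, K := by
          refine setIntegral_mono_on (hinv_int x y hx)
            (integrableOn_const (by simp [measure_Ioc_lt_top])) measurableSet_Ioc ?_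
          intro r hr
          exact inv_anti₀ hgc' (hg'_ge r (hx.trans hr.1.le))
      _ = K * (y - x) := by
          rw [setIntegral_const, Real.volume_real_Ioc_of_le hxy, smul_eq_mul,
            mul_comm]
  have hΦ_lip : ∀ x y, x ≤ y → Φ y - Φ x ≤ K * (y - x) := by
    intro x y hxy
    rcases le_or_gt c x with hcx | hxc
    · rw [hΦ_split x y hcx hxy]
      have := hΦ_piece x y hcx hxy
      linarith
    · have hΦx : Φ x = 0 := by
        show (∫ r in Set.Ioc c x, (g' r)⁻¹) = 0
        rw [Set.Ioc_eq_empty (by exact fun h => absurd h (not_lt.2 hxc.le))]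
        simp
      rcases le_or_gt y c with hyc | hcy
      · have hΦy : Φ y = 0 := by
          show (∫ r in Set.Ioc c y, (g' r)⁻¹) = 0
          rw [Set.Ioc_eq_empty (by exact fun h => absurd h (not_lt.2 hyc))]
          simp
        rw [hΦx, hΦy]
        nlinarith
      · have h1 : Φ y = Φ c + ∫ r in Set.Ioc c y, (g' r)⁻¹ := hΦ_split c y le_rfl hcy.le
        have hΦc : Φ c = 0 := by
          show (∫ r in Set.Ioc c c, (g' r)⁻¹) = 0
          simp
        have h2 := hΦ_piece c y le_rfl hcy.le
        rw [hΦx, h1, hΦc]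
        nlinarith
  have hΦ_lipschitz : LipschitzWith (Real.toNNReal K) Φ := by
    refine LipschitzWith.of_dist_le_mul ?_
    intro x y
    rcases le_total x y with h | h
    · rw [Real.dist_eq, Real.dist_eq, abs_sub_comm (Φ x) (Φ y),
        abs_of_nonneg (sub_nonneg.2 (hΦ_mono h)), abs_sub_comm x y,
        abs_of_nonneg (sub_nonneg.2 h), Real.coe_toNNReal K hK_pos.le]
      exact hΦ_lip x y h
    · rw [Real.dist_eq, Real.dist_eq,
        abs_of_nonneg (sub_nonneg.2 (hΦ_mono h)),
        abs_of_nonneg (sub_nonneg.2 h), Real.coe_toNNReal K hK_pos.le]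
      exact hΦ_lip y x h
  -- a.e. comparison f ≤ F on [t₀, T]
  have hfF : ∀ᵐ u ∂(volume.restrict (Set.Icc t₀ T)), f u ≤ F u := by
    filter_upwards [h_ineq, ae_restrict_mem measurableSet_Icc] with u hu hmem
    have heq : (∫ s in t₀..u, γ s * g (f s)) = ∫ s in t₀..u, ρ s := by
      refine intervalIntegral.integral_congr ?_
      intro s hs
      rw [Set.uIcc_of_le hmem.1] at hs
      have hsmem : s ∈ Set.Icc t₀ T := ⟨hs.1, hs.2.trans hmem.2⟩
      show γ s * g (f s) = γ s * g' (f s)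
      rw [hg'_eq (f s) (hf_mem s hsmem)]
    show f u ≤ c + ∫ s in t₀..u, ρ s
    rw [← heq]
    exact hu
  have hρ_le : ∀ᵐ u ∂(volume.restrict (Set.Icc t₀ T)), ρ u ≤ γ u * g' (F u) := by
    filter_upwards [hfF, ae_restrict_mem measurableSet_Icc] with u hu hmem
    exact mul_le_mul_of_nonneg_left (hg'_mono hu) (hγ_nonneg u hmem)
  -- integrability of γ · g'∘F on [t₀, T]
  have hγgF_int : IntegrableOn (fun u => γ u * g' (F u)) (Set.Icc t₀ T) := by
    have h1 : IntegrableOn (fun u => g' (F u) * γ u) (Set.Icc t₀ T) := by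
      refine Integrable.bdd_mul (c := g a) hγ_int ?_ (Filter.Eventually.of_forall ?_)
      · exact ((hg'_cont.comp_continuousOn hF_cont).aestronglyMeasurable measurableSet_Icc)
      · intro x
        rw [Real.norm_eq_abs, abs_of_nonneg (hg'_nonneg _)]
        exact hg'_le _
    exact h1.congr_fun (fun s _ => mul_comm _ _) measurableSet_Icc
  -- main claim by continuous induction
  have key : ∀ ε : ℝ, 0 < ε → ∀ t ∈ Set.Icc t₀ T, Φ (F t) ≤ (1 + ε) * G t + ε := by
    intro ε hε
    set S : Set ℝ := {t : ℝ | Φ (F t) ≤ (1 + ε) * G t + ε} with hSdef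
    have hsub : Set.Icc t₀ T ⊆ S := by
      refine IsClosed.Icc_subset_of_forall_mem_nhdsWithin ?_ ?_ ?_
      · -- closedness
        have hcont : ContinuousOn (fun t => Φ (F t) - ((1 + ε) * G t + ε)) (Set.Icc t₀ T) :=
          (hΦ_lipschitz.continuous.comp_continuousOn hF_cont).sub
            ((continuousOn_const.mul hG_cont).add continuousOn_const)
        have : S ∩ Set.Icc t₀ T =
            Set.Icc t₀ T ∩ (fun t => Φ (F t) - ((1 + ε) * G t + ε)) ⁻¹' Set.Iic 0 := by
          ext t
          simp only [hSdef, Set.mem_inter_iff, Set.mem_setOf_eq, Set.mem_preimage,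
            Set.mem_Iic, and_comm]
          constructor
          · rintro ⟨h1, h2⟩; exact ⟨h1, by linarith⟩
          · rintro ⟨h1, h2⟩; exact ⟨h1, by linarith⟩
        rw [this]
        exact hcont.preimage_isClosed_of_isClosed isClosed_Icc isClosed_Iic
      · -- t₀ ∈ S
        show Φ (F t₀) ≤ (1 + ε) * G t₀ + ε
        have hG0 : G t₀ = 0 := by
          show (∫ s in t₀..t₀, γ s) = 0
          simp
        have hΦc : Φ (F t₀) = 0 := by
          rw [hF_t₀]
          show (∫ r in Set.Ioc c c, (g' r)⁻¹) = 0
          simp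
        rw [hΦc, hG0]
        linarith
      · -- the inductive step
        rintro x ⟨hxS, hx0, hxT⟩
        have hxIcc : x ∈ Set.Icc t₀ T := ⟨hx0, hxT.le⟩
        set gF : ℝ := g' (F x) with hgFdef
        have hgF_pos : 0 < gF := lt_of_lt_of_le hgc' (hg'_ge _ (hF_ge x hxIcc))
        -- continuity of g' ∘ F at x within Icc
        have hcontx : ContinuousWithinAt (fun u => g' (F u)) (Set.Icc t₀ T) x :=
          (hg'_cont.comp_continuousOn hF_cont) x hxIcc
        rw [Metric.continuousWithinAt_iff] at hcontx
        obtain ⟨δ, hδ_pos, hδ⟩ := hcontx (ε * gF) (mul_pos hε hgF_pos)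
        have hbound : ∀ u ∈ Set.Icc t₀ T, dist u x < δ → g' (F u) ≤ (1 + ε) * gF := by
          intro u hu hdu
          have := hδ hu hdu
          rw [Real.dist_eq] at this
          have := abs_lt.1 this
          nlinarith
        refine mem_nhdsGT_iff_exists_Ioc_subset.2 ⟨min (x + δ / 2) T, ?_, ?_⟩
        · exact lt_min (by linarith) hxT
        · intro y hy
          have hyx : x < y := hy.1
          have hyT : y ≤ T := hy.2.trans (min_le_right _ _)
          have hyδ : y - x < δ := by
            have := hy.2.trans (min_le_left _ _)
            linarith
          have hyIcc : y ∈ Set.Icc t₀ T := ⟨hx0.trans hyx.le, hyT⟩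
          -- step 1: F y - F x ≤ (1+ε) * gF * (G y - G x)
          have hsub1 : Set.Ioc x y ⊆ Set.Icc t₀ T := fun u hu =>
            ⟨hx0.trans hu.1.le, hu.2.trans hyT⟩
          have hstep1 : F y - F x ≤ (1 + ε) * gF * (G y - G x) := by
            rw [hF_diff x y hx0 hyx.le hyT, hG_diff x y hx0 hyx.le hyT,
              intervalIntegral.integral_of_le hyx.le, intervalIntegral.integral_of_le hyx.le]
            calc (∫ u in Set.Ioc x y, ρ u) ≤ ∫ u in Set.Ioc x y, γ u * g' (F u) := by
                  refine setIntegral_mono_ae_restrict (hρ_int.mono_set hsub1)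
                    (hγgF_int.mono_set hsub1) ?_
                  exact ae_restrict_of_ae_restrict_of_subset hsub1 hρ_le
              _ ≤ ∫ u in Set.Ioc x y, γ u * ((1 + ε) * gF) := by
                  refine setIntegral_mono_on (hγgF_int.mono_set hsub1)
                    ((hγ_int.mono_set hsub1).mul_const _) measurableSet_Ioc ?_
                  intro u hu
                  have huIcc : u ∈ Set.Icc t₀ T := hsub1 hu
                  have hdu : dist u x < δ := by
                    rw [Real.dist_eq, abs_of_nonneg (by linarith [hu.1.le] : (0:ℝ) ≤ u - x)]
                    linarith [hu.2]
                  exact mul_le_mul_of_nonneg_left (hbound u huIcc hdu) (hγ_nonneg u huIcc)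
              _ = (1 + ε) * gF * ∫ u in Set.Ioc x y, γ u := by
                  rw [MeasureTheory.integral_mul_const]
                  ring
          -- step 2: Φ (F y) ≤ Φ (F x) + gF⁻¹ * (F y - F x)
          have hFxy : F x ≤ F y := hF_mono x y hx0 hyx.le hyT
          have hstep2 : Φ (F y) ≤ Φ (F x) + gF⁻¹ * (F y - F x) := by
            rw [hΦ_split (F x) (F y) (hF_ge x hxIcc) hFxy]
            have : (∫ r in Set.Ioc (F x) (F y), (g' r)⁻¹) ≤ gF⁻¹ * (F y - F x) := by
              calc (∫ r in Set.Ioc (F x) (F y), (g' r)⁻¹) ≤ ∫ _ in Set.Ioc (F x) (F y), gF⁻¹ := by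
                    refine setIntegral_mono_on (hinv_int (F x) (F y) (hF_ge x hxIcc))
                      (integrableOn_const (by simp [measure_Ioc_lt_top]))
                      measurableSet_Ioc ?_
                    intro r hr
                    exact inv_anti₀ hgF_pos (hg'_mono hr.1.le)
                _ = gF⁻¹ * (F y - F x) := by
                    rw [setIntegral_const, Real.volume_real_Ioc_of_le hFxy, smul_eq_mul,
                      mul_comm]
            linarith
          -- combine
          have hGxy : G x ≤ G y := by
            have h0 : (0:ℝ) ≤ ∫ s in x..y, γ s :=
              intervalIntegral.integral_nonneg hyx.le (fun u hu =>
                hγ_nonneg u ⟨hx0.trans hu.1, hu.2.trans hyT⟩)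
            have := hG_diff x y hx0 hyx.le hyT
            linarith
          have hxS' : Φ (F x) ≤ (1 + ε) * G x + ε := hxS
          show Φ (F y) ≤ (1 + ε) * G y + ε
          have hcancel : gF⁻¹ * ((1 + ε) * gF * (G y - G x)) = (1 + ε) * (G y - G x) := by
            field_simp
          have h3 : gF⁻¹ * (F y - F x) ≤ (1 + ε) * (G y - G x) := by
            rw [← hcancel]
            exact mul_le_mul_of_nonneg_left hstep1 (inv_nonneg.2 hgF_pos.le)
          linarith
    intro t ht
    exact hsub ht
  -- pass to the limit ε → 0
  have final : ∀ t ∈ Set.Icc t₀ T, Φ (F t) ≤ G t := by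
    intro t ht
    have hGt : 0 ≤ G t := hG_nonneg t ht
    refine le_of_forall_pos_le_add ?_
    intro ε' hε'
    have hd : 0 < G t + 1 := by linarith
    have hε : 0 < ε' / (G t + 1) := div_pos hε' hd
    calc Φ (F t) ≤ (1 + ε' / (G t + 1)) * G t + ε' / (G t + 1) := key _ hε t ht
      _ = G t + (ε' / (G t + 1)) * (G t + 1) := by ring
      _ = G t + ε' := by rw [div_mul_cancel₀ _ hd.ne']
  -- conclusion
  filter_upwards [hfF, ae_restrict_mem measurableSet_Icc] with t hft hmem
  have hfta : f t ∈ Set.Icc (0:ℝ) a := hf_mem t hmem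
  calc (∫ r in Set.Ioc c (f t), (g r)⁻¹) = ∫ r in Set.Ioc c (f t), (g' r)⁻¹ := by
        refine setIntegral_congr_fun measurableSet_Ioc ?_
        intro r hr
        show (g r)⁻¹ = (g' r)⁻¹
        rw [hg'_eq r ⟨(hc.trans hr.1).le, hr.2.trans hfta.2⟩]
    _ ≤ Φ (F t) := by
        refine setIntegral_mono_set (hinv_int c (F t) le_rfl)
          (Filter.Eventually.of_forall (fun r => inv_nonneg.2 (hg'_nonneg _)))
          ((Set.Ioc_subset_Ioc_right hft).eventuallyLE)
    _ ≤ G t := final t hmem
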